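/- arXiv:1603.03508 — 2 statements merged into one kernel-verified Lean document; each statement's English description precedes it below -/
import Mathlib

section
/- In the trisection configuration, with F = (c₁, 0) the foot of the perpendicular from C = (c₁, 1) to the x-axis, E the midpoint of CD where |CD| = 2 and d₂ > 1, O = (0,0) with OE ⊥ CD: the unsigned angle ∠DOF (between ray OD and ray OF) equals 3·∠COF. -/
open EuclideanGeometry RealInnerProductSpace

noncomputable def pt (x y : ℝ) : EuclideanSpace ℝ (Fin 2) := WithLp.toLp 2 ![x, y]

set_option maxHeartbeats 1000000 in
/-- In the trisection configuration, with `F = (c₁, 0)` the foot of the perpendicular from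
`C = (c₁, 1)` (with `c₁ > 0`) to the `x`-axis, `D = (d₁, d₂)` with `d₂ > 1` and
`|CD| = 2`, `E` the midpoint of `CD`, and `OE ⊥ CD` where `O` is the origin, the unsigned
angle `∠ D O F` equals `3 ⬝ ∠ C O F`. -/
theorem carpenters_square_triple_angle (c₁ d₁ d₂ : ℝ) (hc₁ : 0 < c₁) (hd₂ : 1 < d₂)
    (O C D E Fpt : EuclideanSpace ℝ (Fin 2))
    (hO : O = pt 0 0) (hC : C = pt c₁ 1) (hD : D = pt d₁ d₂)
    (hCD : dist C D = 2) (hE : E = midpoint ℝ C D) (hF : Fpt = pt c₁ 0)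
    (hperp : ⟪E - O, D - C⟫ = 0) :
    ∠ D O Fpt = 3 * ∠ C O Fpt := by
  subst hO hC hD hE hF
  simp [pt, midpoint, AffineMap.lineMap_apply, PiLp.inner_apply, PiLp.add_apply,
    PiLp.smul_apply, PiLp.sub_apply, smul_eq_mul, Fin.sum_univ_two] at hperp
  rw [show (2:ℝ) = Real.sqrt 4 by
    rw [show (4:ℝ) = 2^2 by norm_num, Real.sqrt_sq]; norm_num] at hCD
  simp [pt, EuclideanSpace.dist_eq, Fin.sum_univ_two, Real.dist_eq, sq_abs] at hCD
  have hCD' : (c₁ - d₁)^2 + (1 - d₂)^2 = 4 :=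
    (Real.sqrt_inj (by positivity) (by norm_num)).1 hCD
  -- |OD|² = |OC|²
  have h1 : d₁^2 + d₂^2 = c₁^2 + 1 := by nlinarith [hperp]
  -- linear relation from subtracting the two circle equations
  have hL : c₁ * d₁ + d₂ = c₁^2 - 1 := by nlinarith [hCD', h1]
  have hq : c₁^2 + 1 > 0 := by positivity
  have hd1ne : d₁ ≠ c₁ := by
    intro h; rw [h] at hL; nlinarith
  have hd1 : d₁ = c₁ * (c₁^2 - 3) / (c₁^2 + 1) := by
    have hfac : (d₁ - c₁) * ((c₁^2+1) * d₁ - c₁ * (c₁^2 - 3)) = 0 := by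
      nlinarith [hCD', h1, hL]
    rcases mul_eq_zero.1 hfac with h | h
    · exact absurd (by linarith) hd1ne
    · field_simp; linarith
  have hc1gt : 1 < c₁ := by
    have hd2v : d₂ = (3*c₁^2 - 1) / (c₁^2 + 1) := by
      rw [hd1] at hL; field_simp at hL ⊢; linarith
    rw [hd2v, lt_div_iff₀ hq] at hd₂
    nlinarith
  -- set up s = |OC| = |OD|
  set s := Real.sqrt (c₁^2 + 1) with hsdef
  have hs0 : 0 < s := Real.sqrt_pos.2 hq
  have hs : s^2 = c₁^2 + 1 := Real.sq_sqrt hq.le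
  -- compute the two angles as arccos values
  have hANG : ∀ (x y p : EuclideanSpace ℝ (Fin 2)),
      ∠ x p y = Real.arccos (⟪x - p, y - p⟫ / (‖x - p‖ * ‖y - p‖)) := by
    intro x y p
    rw [EuclideanGeometry.angle, InnerProductGeometry.angle, vsub_eq_sub, vsub_eq_sub]
  have hCOF : ∠ (pt c₁ 1) (pt 0 0) (pt c₁ 0) = Real.arccos (c₁ / s) := by
    rw [hANG]
    simp [pt, PiLp.inner_apply, PiLp.sub_apply, Fin.sum_univ_two, EuclideanSpace.norm_eq,
      Real.norm_eq_abs, sq_abs]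
    rw [Real.sqrt_sq hc₁.le, ← hsdef]
    congr 1
    field_simp
  have hDOF : ∠ (pt d₁ d₂) (pt 0 0) (pt c₁ 0) = Real.arccos (d₁ / s) := by
    rw [hANG]
    simp [pt, PiLp.inner_apply, PiLp.sub_apply, Fin.sum_univ_two, EuclideanSpace.norm_eq,
      Real.norm_eq_abs, sq_abs]
    rw [Real.sqrt_sq hc₁.le, h1, ← hsdef]
    congr 1
    field_simp
  rw [hCOF, hDOF]
  clear hCD hperp hCD' hDOF hCOF hANG h1 hL hd1ne
  -- now a purely trigonometric identity
  have hcs : c₁ < s := by nlinarith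
  have hx0 : 0 ≤ c₁ / s := by positivity
  have hxle : c₁ / s ≤ 1 := (div_le_one hs0).2 hcs.le
  have hxhalf : 1/2 ≤ c₁ / s := by
    rw [div_le_div_iff₀ (by norm_num) hs0]; nlinarith
  have hθle : Real.arccos (c₁ / s) ≤ Real.pi / 3 := by
    calc Real.arccos (c₁ / s) ≤ Real.arccos (1/2) := by
          unfold Real.arccos
          have := Real.monotone_arcsin hxhalf
          linarith
    _ = Real.pi / 3 := by
          rw [← Real.cos_pi_div_three, Real.arccos_cos (by positivity)
            (by linarith [Real.pi_pos])]
  have hθ0 : 0 ≤ Real.arccos (c₁ / s) := Real.arccos_nonneg _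
  have hcos : Real.cos (3 * Real.arccos (c₁ / s)) = d₁ / s := by
    rw [Real.cos_three_mul, Real.cos_arccos (by linarith) hxle, hd1]
    field_simp
    linear_combination (-4*c₁^2) * hs
  rw [← hcos, Real.arccos_cos (by linarith) (by linarith)]
end

section
/- Every angle θ ∈ (0, π) can be trisected using the carpenter's square curve: there exists a point D = (x, y) with x = r cos θ·t, y = r sin θ·t for some r > 0 (i.e., D on the open ray at angle θ) lying on the curve x²(3-y) = (y-2)²(y+1) with 1 < y < 3. -/
/-- Every angle `θ ∈ (0, π)` can be trisected using the carpenter's square curve: the open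
ray from the origin at angle `θ` meets the portion of the curve with `1 < y < 3`. -/
theorem carpenters_square_curve_meets_every_ray (θ : ℝ)
    (hθ₁ : 0 < θ) (hθ₂ : θ < Real.pi) :
    ∃ r : ℝ, 0 < r ∧ ∃ x y : ℝ, x = r * Real.cos θ ∧ y = r * Real.sin θ ∧
      x ^ 2 * (3 - y) = (y - 2) ^ 2 * (y + 1) ∧ 1 < y ∧ y < 3 := by
  have hs : 0 < Real.sin θ := Real.sin_pos_of_pos_of_lt_pi hθ₁ hθ₂
  set c : ℝ := Real.cos θ / Real.sin θ with hc
  set f : ℝ → ℝ := fun y => y ^ 2 * c ^ 2 * (3 - y) - (y - 2) ^ 2 * (y + 1) with hf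
  have hcont : ContinuousOn f (Set.Icc (2 : ℝ) 3) := by
    apply Continuous.continuousOn; fun_prop
  have hsub := intermediate_value_Icc' (by norm_num : (2:ℝ) ≤ 3) hcont
  have h0 : (0 : ℝ) ∈ Set.Icc (f 3) (f 2) := by
    constructor <;> simp [hf] <;> nlinarith [sq_nonneg c]
  obtain ⟨y, hy, hfy⟩ := hsub h0
  have hy2 : 2 ≤ y := hy.1
  have hy3 : y < 3 := by
    rcases lt_or_eq_of_le hy.2 with h | h
    · exact h
    · exfalso; rw [h] at hfy; simp only [hf] at hfy; norm_num at hfy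
  refine ⟨y / Real.sin θ, by positivity, y * c, y, ?_, ?_, ?_, by linarith, hy3⟩
  · field_simp [hc]; rw [hc, div_mul_cancel₀ _ hs.ne']
  · field_simp
  · have : y ^ 2 * c ^ 2 * (3 - y) = (y - 2) ^ 2 * (y + 1) := by
      have := hfy; simp [hf] at this; linarith
    nlinarith [this]
end
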